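/- Let U be a real trigonometric polynomial and let J, J' ⊂ ℝ be closed nondegenerate intervals such that U is strictly monotone on each of J and J' and maps each of them onto [−1, 1]. Define φ : J → J' by φ(t) = (U|_{J'})^{−1}(U(t)). Then for every positive integer l there exists C = C(U, l) > 0 such that for all t in the interior of J, |φ^{(l)}(t)| ≤ C · |U'(φ(t))|^{−(2l−1)}. -/

import Mathlib

open scoped Real

/-- A real trigonometric polynomial of degree at most `n`. -/
def IsTrigPoly (n : ℕ) (T : ℝ → ℝ) : Prop :=
  ∃ A B : ℕ → ℝ,
    T = fun t => ∑ j ∈ Finset.range (n + 1),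
      (A j * Real.cos (j * t) + B j * Real.sin (j * t))

open scoped ContDiff Topology

/-- The numerator sequence: `φ^{(m+1)}(t) = Nfun U m (t, φ t) / (U'(φ t))^(2m+1)`. -/
noncomputable def Nfun (U : ℝ → ℝ) : ℕ → (ℝ × ℝ) → ℝ
  | 0 => fun p => deriv U p.1
  | (m+1) => fun p =>
      fderiv ℝ (Nfun U m) p (1, 0) * (deriv U p.2)^2
      + fderiv ℝ (Nfun U m) p (0, 1) * (deriv U p.1 * deriv U p.2)
      - (2*m+1 : ℝ) * (Nfun U m p * (deriv (deriv U) p.2 * deriv U p.1))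

theorem Nfun_contDiff {U : ℝ → ℝ} (hU : ContDiff ℝ ∞ U) (m : ℕ) :
    ContDiff ℝ ∞ (Nfun U m) := by
  have hU' : ContDiff ℝ ∞ (deriv U) := (contDiff_infty_iff_deriv.mp hU).2
  have hU'' : ContDiff ℝ ∞ (deriv (deriv U)) := (contDiff_infty_iff_deriv.mp hU').2
  induction m with
  | zero => exact hU'.comp contDiff_fst
  | succ m ih =>
      have hfd : ContDiff ℝ ∞ (fderiv ℝ (Nfun U m)) := ih.fderiv_right (by simp)
      exact (((hfd.clm_apply contDiff_const).mul ((hU'.comp contDiff_snd).pow 2)).add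
        ((hfd.clm_apply contDiff_const).mul
          ((hU'.comp contDiff_fst).mul (hU'.comp contDiff_snd)))).sub
        (contDiff_const.mul ((ih).mul ((hU''.comp contDiff_snd).mul (hU'.comp contDiff_fst))))

lemma phi_hasDerivAt {U φ : ℝ → ℝ} {t0 : ℝ} (hU : ContDiff ℝ ∞ U)
    (hc : ContinuousAt φ t0) (hev : ∀ᶠ t in 𝓝 t0, U (φ t) = U t)
    (hD : deriv U (φ t0) ≠ 0) :
    HasDerivAt φ (deriv U t0 / deriv U (φ t0)) t0 := by
  have hs : HasStrictDerivAt U (deriv U (φ t0)) (φ t0) :=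
    hU.contDiffAt.hasStrictDerivAt (by simp)
  set g := hs.localInverse U _ (φ t0) hD with hgdef
  have hleft : ∀ᶠ x in 𝓝 (φ t0), g (U x) = x :=
    (hs.hasStrictFDerivAt_equiv hD).eventually_left_inverse
  have hg : HasStrictDerivAt g (deriv U (φ t0))⁻¹ (U (φ t0)) := hs.to_localInverse hD
  have h1 : ∀ᶠ t in 𝓝 t0, g (U (φ t)) = φ t := hc.eventually hleft
  have heq : φ =ᶠ[𝓝 t0] fun t => g (U t) := by
    filter_upwards [h1, hev] with t h1t h2t
    rw [← h1t, h2t]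
  have hU0 : U (φ t0) = U t0 := hev.self_of_nhds
  have hgd : HasDerivAt g (deriv U (φ t0))⁻¹ (U t0) := hU0 ▸ hg.hasDerivAt
  have hcomp : HasDerivAt (fun t => g (U t)) ((deriv U (φ t0))⁻¹ * deriv U t0) t0 :=
    hgd.comp t0 (hU.differentiable (by simp) t0).hasDerivAt
  rw [div_eq_inv_mul]
  exact heq.hasDerivAt_iff.mpr hcomp

lemma key_step {U φ : ℝ → ℝ} {t0 : ℝ} (hU : ContDiff ℝ ∞ U) (m : ℕ)
    (hφd : HasDerivAt φ (deriv U t0 / deriv U (φ t0)) t0)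
    (hD : deriv U (φ t0) ≠ 0) :
    deriv (fun t => Nfun U m (t, φ t) / (deriv U (φ t))^(2*m+1)) t0
      = Nfun U (m+1) (t0, φ t0) / (deriv U (φ t0))^(2*(m+1)+1) := by
  set D : ℝ := deriv U (φ t0) with hDdef
  set u : ℝ := deriv U t0 with hudef
  set w : ℝ := deriv (deriv U) (φ t0) with hwdef
  set L : ℝ × ℝ →L[ℝ] ℝ := fderiv ℝ (Nfun U m) (t0, φ t0) with hLdef
  have hU' : ContDiff ℝ ∞ (deriv U) := (contDiff_infty_iff_deriv.mp hU).2
  have hpair : HasDerivAt (fun t => (t, φ t)) (1, u / D) t0 :=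
    (hasDerivAt_id t0).prodMk hφd
  have hNf : HasFDerivAt (Nfun U m) L (t0, φ t0) :=
    (((Nfun_contDiff hU m).differentiable (by simp)) (t0, φ t0)).hasFDerivAt
  have hNd : HasDerivAt (fun t => Nfun U m (t, φ t)) (L (1, u / D)) t0 :=
    hNf.comp_hasDerivAt t0 hpair
  have hDd : HasDerivAt (fun t => deriv U (φ t)) (w * (u / D)) t0 :=
    ((hU'.differentiable (by simp)) (φ t0)).hasDerivAt.comp t0 hφd
  have hpow : HasDerivAt (fun t => (deriv U (φ t))^(2*m+1))
      ((2*m+1 : ℕ) * D^(2*m) * (w * (u / D))) t0 := by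
    simpa using hDd.fun_pow (2*m+1)
  have hdiv := hNd.fun_div hpow (pow_ne_zero _ hD)
  rw [hdiv.deriv]
  have hL : L (1, u / D) = L (1, 0) + (u / D) * L (0, 1) := by
    have : ((1 : ℝ), u / D) = (1, 0) + (u / D) • (0, 1) := by
      simp [Prod.ext_iff]
    rw [this, map_add, map_smul, smul_eq_mul]
  rw [hL]
  show _ = (L (1,0) * D^2 + L (0,1) * (u * D) - (2*m+1 : ℝ) * (Nfun U m (t0, φ t0) * (w * u)))
      / D^(2*(m+1)+1)
  have h2 : (2*(m+1)+1) = (2*m+1) + 2 := by ring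
  rw [h2]
  rw [← hDdef]
  push_cast
  field_simp
  ring

theorem stmt_10 (U : ℝ → ℝ) (hU : ∃ N : ℕ, IsTrigPoly N U)
    (c d c' d' : ℝ) (hcd : c < d) (hcd' : c' < d')
    (hmonoJ : StrictMonoOn U (Set.Icc c d) ∨ StrictAntiOn U (Set.Icc c d))
    (hmonoJ' : StrictMonoOn U (Set.Icc c' d') ∨ StrictAntiOn U (Set.Icc c' d'))
    (hontoJ : U '' Set.Icc c d = Set.Icc (-1) 1)
    (hontoJ' : U '' Set.Icc c' d' = Set.Icc (-1) 1)
    (φ : ℝ → ℝ)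
    (hφ : ∀ t ∈ Set.Icc c d, φ t ∈ Set.Icc c' d' ∧ U (φ t) = U t) :
    ∀ l : ℕ, 0 < l → ∃ C > (0 : ℝ), ∀ t ∈ Set.Ioo c d,
      |iteratedDeriv l φ t| * |deriv U (φ t)| ^ (2 * l - 1) ≤ C := by
  -- smoothness of U
  have hUsm : ContDiff ℝ ∞ U := by
    obtain ⟨n, A, B, hUeq⟩ := hU
    rw [hUeq]
    apply ContDiff.sum
    intro j _
    exact (contDiff_const.mul (Real.contDiff_cos.comp (contDiff_const.mul contDiff_id))).add
      (contDiff_const.mul (Real.contDiff_sin.comp (contDiff_const.mul contDiff_id)))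
  have hφmem : ∀ t ∈ Set.Icc c d, φ t ∈ Set.Icc c' d' := fun t ht => (hφ t ht).1
  have hφU : ∀ t ∈ Set.Icc c d, U (φ t) = U t := fun t ht => (hφ t ht).2
  have hinj' : Set.InjOn U (Set.Icc c' d') := hmonoJ'.elim StrictMonoOn.injOn StrictAntiOn.injOn
  -- surjectivity of φ onto Icc c' d'
  have hsurj : ∀ y ∈ Set.Icc c' d', ∃ t ∈ Set.Icc c d, φ t = y := by
    intro y hy
    have h1 : U y ∈ Set.Icc (-1 : ℝ) 1 := hontoJ' ▸ Set.mem_image_of_mem U hy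
    rw [← hontoJ] at h1
    obtain ⟨t, ht, hUt⟩ := h1
    exact ⟨t, ht, hinj' (hφmem t ht) hy (by rw [hφU t ht, hUt])⟩
  have himg : φ '' Set.Icc c d = Set.Icc c' d' := by
    apply Set.Subset.antisymm
    · rintro y ⟨t, ht, rfl⟩; exact hφmem t ht
    · intro y hy; obtain ⟨t, ht, hty⟩ := hsurj y hy; exact ⟨t, ht, hty⟩
  -- φ is monotone or antitone
  have hmonoφ : MonotoneOn φ (Set.Icc c d) ∨ AntitoneOn φ (Set.Icc c d) := by
    rcases hmonoJ with hJ | hJ <;> rcases hmonoJ' with hJ' | hJ'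
    · left; intro t1 h1 t2 h2 h12
      by_contra hlt
      have h3 : U (φ t2) < U (φ t1) := hJ' (hφmem t2 h2) (hφmem t1 h1) (not_le.mp hlt)
      rw [hφU t2 h2, hφU t1 h1] at h3
      have h4 : U t1 ≤ U t2 := hJ.monotoneOn h1 h2 h12
      linarith
    · right; intro t1 h1 t2 h2 h12
      by_contra hlt
      have h3 : U (φ t2) < U (φ t1) := hJ' (hφmem t1 h1) (hφmem t2 h2) (not_le.mp hlt)
      rw [hφU t2 h2, hφU t1 h1] at h3
      have h4 : U t1 ≤ U t2 := hJ.monotoneOn h1 h2 h12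
      linarith
    · right; intro t1 h1 t2 h2 h12
      by_contra hlt
      have h3 : U (φ t1) < U (φ t2) := hJ' (hφmem t1 h1) (hφmem t2 h2) (not_le.mp hlt)
      rw [hφU t2 h2, hφU t1 h1] at h3
      have h4 : U t2 ≤ U t1 := hJ.antitoneOn h1 h2 h12
      linarith
    · left; intro t1 h1 t2 h2 h12
      by_contra hlt
      have h3 : U (φ t1) < U (φ t2) := hJ' (hφmem t2 h2) (hφmem t1 h1) (not_le.mp hlt)
      rw [hφU t2 h2, hφU t1 h1] at h3
      have h4 : U t2 ≤ U t1 := hJ.antitoneOn h1 h2 h12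
      linarith
  -- interior values of U
  have hUint : ∀ t ∈ Set.Ioo c d, -1 < U t ∧ U t < 1 := by
    intro t ht
    have htm : t ∈ Set.Icc c d := Set.Ioo_subset_Icc_self ht
    have hcm : c ∈ Set.Icc c d := Set.left_mem_Icc.mpr hcd.le
    have hdm : d ∈ Set.Icc c d := Set.right_mem_Icc.mpr hcd.le
    have hUc : U c ∈ Set.Icc (-1 : ℝ) 1 := hontoJ ▸ Set.mem_image_of_mem U hcm
    have hUd : U d ∈ Set.Icc (-1 : ℝ) 1 := hontoJ ▸ Set.mem_image_of_mem U hdm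
    rcases hmonoJ with hJ | hJ
    · exact ⟨lt_of_le_of_lt hUc.1 (hJ hcm htm ht.1), lt_of_lt_of_le (hJ htm hdm ht.2) hUd.2⟩
    · exact ⟨lt_of_le_of_lt hUd.1 (hJ htm hdm ht.2), lt_of_lt_of_le (hJ hcm htm ht.1) hUc.2⟩
  -- endpoint values of U on J'
  have hUend : (U c' = -1 ∨ U c' = 1) ∧ (U d' = -1 ∨ U d' = 1) := by
    have hcm : c' ∈ Set.Icc c' d' := Set.left_mem_Icc.mpr hcd'.le
    have hdm : d' ∈ Set.Icc c' d' := Set.right_mem_Icc.mpr hcd'.le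
    have hUc : U c' ∈ Set.Icc (-1 : ℝ) 1 := hontoJ' ▸ Set.mem_image_of_mem U hcm
    have hUd : U d' ∈ Set.Icc (-1 : ℝ) 1 := hontoJ' ▸ Set.mem_image_of_mem U hdm
    have hm1 : ∃ y ∈ Set.Icc c' d', U y = -1 := by
      have : (-1 : ℝ) ∈ U '' Set.Icc c' d' := by rw [hontoJ']; exact Set.left_mem_Icc.mpr (by norm_num)
      obtain ⟨y, hy, hUy⟩ := this; exact ⟨y, hy, hUy⟩
    have hp1 : ∃ y ∈ Set.Icc c' d', U y = 1 := by
      have : (1 : ℝ) ∈ U '' Set.Icc c' d' := by rw [hontoJ']; exact Set.right_mem_Icc.mpr (by norm_num)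
      obtain ⟨y, hy, hUy⟩ := this; exact ⟨y, hy, hUy⟩
    rcases hmonoJ' with hJ' | hJ'
    · obtain ⟨y, hy, hUy⟩ := hm1
      obtain ⟨z, hz, hUz⟩ := hp1
      constructor
      · left; exact le_antisymm (hUy ▸ hJ'.monotoneOn hcm hy hy.1) hUc.1
      · right; exact le_antisymm hUd.2 (hUz ▸ hJ'.monotoneOn hz hdm hz.2)
    · obtain ⟨y, hy, hUy⟩ := hm1
      obtain ⟨z, hz, hUz⟩ := hp1
      constructor
      · right; exact le_antisymm hUc.2 (hUz ▸ hJ'.antitoneOn hcm hz hz.1)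
      · left; exact le_antisymm (hUy ▸ hJ'.antitoneOn hy hdm hy.2) hUd.1
  -- φ maps the interior to the interior
  have hφint : ∀ t ∈ Set.Ioo c d, φ t ∈ Set.Ioo c' d' := by
    intro t ht
    have htm : t ∈ Set.Icc c d := Set.Ioo_subset_Icc_self ht
    have hmem := hφmem t htm
    have hUt := hUint t ht
    rcases lt_or_eq_of_le hmem.1 with h1 | h1
    · rcases lt_or_eq_of_le hmem.2 with h2 | h2
      · exact ⟨h1, h2⟩
      · exfalso
        have : U (φ t) = U d' := by rw [h2]
        rw [hφU t htm] at this
        rcases hUend.2 with h | h <;> rw [h] at this <;> linarith [hUt.1, hUt.2]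
    · exfalso
      have : U (φ t) = U c' := by rw [← h1]
      rw [hφU t htm] at this
      rcases hUend.1 with h | h <;> rw [h] at this <;> linarith [hUt.1, hUt.2]
  -- continuity of φ at interior points
  have hφcont : ∀ t0 ∈ Set.Ioo c d, ContinuousAt φ t0 := by
    intro t0 ht0
    have hmem1 : Set.Icc c d ∈ 𝓝 t0 := Icc_mem_nhds ht0.1 ht0.2
    have hint := hφint t0 ht0
    rcases hmonoφ with hm | hm
    · apply continuousAt_of_monotoneOn_of_image_mem_nhds hm hmem1
      rw [himg]
      exact Icc_mem_nhds hint.1 hint.2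
    · have hm' : MonotoneOn (fun t => -φ t) (Set.Icc c d) :=
        fun a ha b hb hab => neg_le_neg (hm ha hb hab)
    
      have himg' : (fun t => -φ t) '' Set.Icc c d = Set.Icc (-d') (-c') := by
        have : (fun t => -φ t) '' Set.Icc c d = Neg.neg '' (φ '' Set.Icc c d) := by
          rw [← Set.image_comp]; rfl
        rw [this, himg, Set.image_neg_Icc]
      have hcn : ContinuousAt (fun t => -φ t) t0 := by
        apply continuousAt_of_monotoneOn_of_image_mem_nhds hm' hmem1
        rw [himg']
        exact Icc_mem_nhds (by linarith [hint.2]) (by linarith [hint.1])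
      have := hcn.fun_neg
      simpa using this
  -- continuity of t ↦ U'(φ t) at interior points
  have hU' : ContDiff ℝ ∞ (deriv U) := (contDiff_infty_iff_deriv.mp hUsm).2
  have hDcont : ∀ t0 ∈ Set.Ioo c d, ContinuousAt (fun t => deriv U (φ t)) t0 :=
    fun t0 ht0 => (hU'.continuous.continuousAt).comp (hφcont t0 ht0)
  have hevU : ∀ t0 ∈ Set.Ioo c d, ∀ᶠ t in 𝓝 t0, U (φ t) = U t := fun t0 ht0 =>
    Filter.eventually_of_mem (Icc_mem_nhds ht0.1 ht0.2) (fun t ht => hφU t ht)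
  have hφd : ∀ t0 ∈ Set.Ioo c d, deriv U (φ t0) ≠ 0 →
      HasDerivAt φ (deriv U t0 / deriv U (φ t0)) t0 :=
    fun t0 ht0 hD => phi_hasDerivAt hUsm (hφcont t0 ht0) (hevU t0 ht0) hD
  -- the key formula
  have key : ∀ m : ℕ, ∀ t0 ∈ Set.Ioo c d, deriv U (φ t0) ≠ 0 →
      iteratedDeriv (m+1) φ t0 = Nfun U m (t0, φ t0) / (deriv U (φ t0))^(2*m+1) := by
    intro m
    induction m with
    | zero =>
        intro t0 ht0 hD
        rw [iteratedDeriv_one, (hφd t0 ht0 hD).deriv]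
        simp [Nfun]
    | succ m ih =>
        intro t0 ht0 hD
        have hevS : ∀ᶠ t in 𝓝 t0, t ∈ Set.Ioo c d ∧ deriv U (φ t) ≠ 0 :=
          (isOpen_Ioo.eventually_mem ht0).and ((hDcont t0 ht0).eventually_ne hD)
        have heq2 : iteratedDeriv (m+1) φ =ᶠ[𝓝 t0]
            fun t => Nfun U m (t, φ t) / (deriv U (φ t))^(2*m+1) :=
          hevS.mono fun t ht => ih t ht.1 ht.2
        rw [iteratedDeriv_succ, heq2.deriv_eq, key_step hUsm m (hφd t0 ht0 hD) hD]
  -- conclusion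
  intro l hl
  obtain ⟨m, rfl⟩ : ∃ m, l = m + 1 := ⟨l - 1, (Nat.succ_pred_eq_of_pos hl).symm⟩
  obtain ⟨C0, hC0⟩ := (isCompact_Icc.prod isCompact_Icc).exists_bound_of_continuousOn
    (s := Set.Icc c d ×ˢ Set.Icc c' d') ((Nfun_contDiff hUsm m).continuous.continuousOn)
  refine ⟨max C0 1, lt_of_lt_of_le one_pos (le_max_right _ _), ?_⟩
  intro t ht
  by_cases hD : deriv U (φ t) = 0
  · rw [hD, abs_zero, zero_pow (by omega : 2*(m+1)-1 ≠ 0), mul_zero]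
    positivity
  · rw [key m t ht hD]
    have h21 : 2*(m+1)-1 = 2*m+1 := by omega
    rw [h21, abs_div, abs_pow, div_mul_cancel₀ _ (pow_ne_zero _ (abs_ne_zero.mpr hD))]
    refine le_trans ?_ (le_max_left _ _)
    have hmem : (t, φ t) ∈ Set.Icc c d ×ˢ Set.Icc c' d' :=
      ⟨Set.Ioo_subset_Icc_self ht, hφmem t (Set.Ioo_subset_Icc_self ht)⟩
    simpa [Real.norm_eq_abs] using hC0 (t, φ t) hmem
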